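/- Let F = (a, x) be an (η, γ)-regular spike-train signal with d nodes: x_1 < … < x_d lie in [−1, 1] with x_{j+1} − x_j ≥ η for all j, where 0 < η ≤ 2/(d−1), and γ ≤ |a_j| ≤ 1 for all j, with 0 < γ ≤ 1. Then for every signal F̃ with at most l nodes, l < d, ‖m̄(F) − m̄(F̃)‖ ≥ min( 1, (η^{d(d−1)} γ^d ∏_{i=1}^{d−1} (i!)^2) / (√(2d−1) · d^2 · d! · (d+1)^{d−1}) ), where m̄(G) = (m_0(G),…,m_{2d−2}(G)) ∈ ℝ^{2d−1} and ‖·‖ is the Euclidean norm. -/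

import Mathlib

open Finset Matrix

lemma aux_det_row_bound {n : ℕ} (M : Matrix (Fin n) (Fin n) ℝ) (k : Fin n)
    (Mb eb : ℝ) (hMb : 0 ≤ Mb) (heb : 0 ≤ eb)
    (hrow : ∀ j, |M k j| ≤ eb) (hoth : ∀ i j, i ≠ k → |M i j| ≤ Mb) :
    |M.det| ≤ (n.factorial : ℝ) * (eb * Mb ^ (n - 1)) := by
  rw [Matrix.det_apply']
  have key : ∀ σ : Equiv.Perm (Fin n),
      |((Equiv.Perm.sign σ : ℤ) : ℝ) * ∏ i, M (σ i) i| ≤ eb * Mb ^ (n - 1) := by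
    intro σ
    rw [abs_mul]
    have hsign : |((Equiv.Perm.sign σ : ℤ) : ℝ)| = 1 := by
      rcases Int.units_eq_one_or (Equiv.Perm.sign σ) with h | h <;> simp [h]
    rw [hsign, one_mul, abs_prod]
    have h1 : ∏ i, |M (σ i) i| =
        |M (σ (σ⁻¹ k)) (σ⁻¹ k)| * ∏ i ∈ univ.erase (σ⁻¹ k), |M (σ i) i| :=
      (Finset.mul_prod_erase univ _ (mem_univ _)).symm
    rw [h1, show σ (σ⁻¹ k) = k by simp]
    have h2 : ∏ i ∈ univ.erase (σ⁻¹ k), |M (σ i) i| ≤ Mb ^ (n - 1) := by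
      have : ∏ i ∈ univ.erase (σ⁻¹ k), |M (σ i) i| ≤ ∏ _i ∈ univ.erase (σ⁻¹ k), Mb := by
        refine Finset.prod_le_prod (fun i _ => abs_nonneg _) (fun i hi => ?_)
        refine hoth _ _ (fun hc => (Finset.mem_erase.1 hi).1 ?_)
        have := congrArg σ.symm hc
        simpa [Equiv.Perm.inv_def] using this
      simpa [Finset.card_erase_of_mem, Finset.card_univ] using this
    exact mul_le_mul (hrow _) h2 (Finset.prod_nonneg fun i _ => abs_nonneg _) heb
  calc |∑ σ : Equiv.Perm (Fin n), ((Equiv.Perm.sign σ : ℤ) : ℝ) * ∏ i, M (σ i) i|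
      ≤ ∑ σ : Equiv.Perm (Fin n), |((Equiv.Perm.sign σ : ℤ) : ℝ) * ∏ i, M (σ i) i| :=
        Finset.abs_sum_le_sum_abs _ _
    _ ≤ ∑ _σ : Equiv.Perm (Fin n), (eb * Mb ^ (n - 1)) :=
        Finset.sum_le_sum fun σ _ => key σ
    _ = (n.factorial : ℝ) * (eb * Mb ^ (n - 1)) := by
        simp [Finset.card_univ, Fintype.card_perm, mul_comm]

lemma aux_det_lipschitz {n : ℕ} (A B : Matrix (Fin n) (Fin n) ℝ) (Mb eb : ℝ)
    (hMb : 0 ≤ Mb) (heb : 0 ≤ eb)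
    (hA : ∀ i j, |A i j| ≤ Mb) (hB : ∀ i j, |B i j| ≤ Mb)
    (hAB : ∀ i j, |A i j - B i j| ≤ eb) :
    |A.det - B.det| ≤ (n : ℝ) * ((n.factorial : ℝ) * (eb * Mb ^ (n - 1))) := by
  set G : ℕ → Matrix (Fin n) (Fin n) ℝ :=
    fun m => Matrix.of (fun i j => if (i : ℕ) < m then A i j else B i j) with hG
  have hG0 : G 0 = B := by ext i j; simp [hG]
  have hGn : G n = A := by ext i j; simp [hG, i.isLt]
  have htel : A.det - B.det = ∑ m ∈ range n, ((G (m + 1)).det - (G m).det) := by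
    rw [Finset.sum_range_sub (fun m => (G m).det), hG0, hGn]
  rw [htel]
  have key : ∀ m ∈ range n, |(G (m + 1)).det - (G m).det| ≤
      (n.factorial : ℝ) * (eb * Mb ^ (n - 1)) := by
    intro m hm
    have hmn : m < n := mem_range.1 hm
    set k : Fin n := ⟨m, hmn⟩ with hk
    have e1 : G (m + 1) = (G m).updateRow k (A k) := by
      ext i j
      by_cases hik : i = k
      · subst hik; simp [hG, Matrix.updateRow_apply, hk]
      · have hne : (i : ℕ) ≠ m := fun hc => hik (Fin.ext hc)
        have h3 : ((i : ℕ) < m + 1) ↔ ((i : ℕ) < m) := by omega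
        simp [hG, Matrix.updateRow_ne hik, h3]
    have e2 : G m = (G m).updateRow k (B k) := by
      ext i j
      by_cases hik : i = k
      · subst hik; simp [hG, Matrix.updateRow_apply, hk]
      · simp [Matrix.updateRow_apply, hik]
    have hAk : A k = (A k - B k) + B k := by funext j; simp
    have e3 : (G (m + 1)).det = ((G m).updateRow k (A k - B k)).det + (G m).det := by
      conv_lhs => rw [e1, hAk]
      rw [Matrix.det_updateRow_add, ← e2]
    rw [e3, add_sub_cancel_right]
    refine aux_det_row_bound _ k Mb eb hMb heb (fun j => ?_) (fun i j hik => ?_)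
    · simp [Matrix.updateRow_self]
      exact hAB _ _
    · rw [Matrix.updateRow_ne hik]
      by_cases h : (i : ℕ) < m <;> simp [hG, h] <;> [exact hA i j; exact hB i j]
  calc |∑ m ∈ range n, ((G (m + 1)).det - (G m).det)|
      ≤ ∑ m ∈ range n, |(G (m + 1)).det - (G m).det| := Finset.abs_sum_le_sum_abs _ _
    _ ≤ ∑ _m ∈ range n, (n.factorial : ℝ) * (eb * Mb ^ (n - 1)) := Finset.sum_le_sum key
    _ = (n : ℝ) * ((n.factorial : ℝ) * (eb * Mb ^ (n - 1))) := by simp [mul_comm]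

lemma aux_prod_range_sub (m : ℕ) : ∏ i ∈ range m, (m - i) = m.factorial := by
  induction m with
  | zero => simp
  | succ m ih =>
    rw [Finset.prod_range_succ']
    simp only [Nat.succ_sub_succ, Nat.sub_zero]
    rw [ih, Nat.factorial_succ, mul_comm]

lemma aux_nat_prod (d : ℕ) :
    (∏ i : Fin d, ∏ j ∈ Ioi i, ((j : ℕ) - (i : ℕ))) = ∏ k ∈ range d, k.factorial := by
  rw [Finset.prod_comm' (t' := (univ : Finset (Fin d))) (s' := fun j => Iio j)
    (fun i j => by simp [Finset.mem_Ioi, Finset.mem_Iio])]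
  rw [← Fin.prod_univ_eq_prod_range (fun k => k.factorial) d]
  refine Finset.prod_congr rfl (fun j _ => ?_)
  have h1 : ∏ i ∈ Iio j, ((j : ℕ) - (i : ℕ)) = ∏ i ∈ Iio (j : ℕ), ((j : ℕ) - i) := by
    rw [← Fin.map_valEmbedding_Iio, Finset.prod_map]
    rfl
  rw [h1, Nat.Iio_eq_range, aux_prod_range_sub]

lemma aux_gap (d : ℕ) (x : Fin d → ℝ) (η : ℝ)
    (hsep : ∀ (j : ℕ) (h : j + 1 < d), x ⟨j + 1, h⟩ - x ⟨j, Nat.lt_of_succ_lt h⟩ ≥ η) :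
    ∀ (i m : ℕ) (h : i + m < d), (m : ℝ) * η ≤ x ⟨i + m, h⟩ - x ⟨i, by omega⟩ := by
  intro i m
  induction m with
  | zero => intro h; simp
  | succ m ih =>
    intro h
    have h1 : i + m < d := by omega
    have h2 : x ⟨i + m + 1, by omega⟩ - x ⟨i + m, h1⟩ ≥ η := hsep (i + m) (by omega)
    have h3 := ih h1
    have h4 : x ⟨i + (m + 1), h⟩ = x ⟨i + m + 1, by omega⟩ := rfl
    push_cast
    rw [h4]
    linarith

lemma aux_vdm_lower (d : ℕ) (x : Fin d → ℝ) (η : ℝ) (hη : 0 < η)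
    (hgap : ∀ i j : Fin d, i < j → ((((j : ℕ) - (i : ℕ) : ℕ) : ℝ)) * η ≤ x j - x i) :
    η ^ (d * (d - 1) / 2) * ((∏ k ∈ range d, k.factorial : ℕ) : ℝ) ≤
      ∏ i : Fin d, ∏ j ∈ Ioi i, (x j - x i) := by
  have step1 : (∏ i : Fin d, ∏ j ∈ Ioi i, ((((j : ℕ) - (i : ℕ) : ℕ) : ℝ) * η)) ≤
      ∏ i : Fin d, ∏ j ∈ Ioi i, (x j - x i) := by
    refine Finset.prod_le_prod (fun i _ => Finset.prod_nonneg fun j _ => by positivity)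
      (fun i _ => Finset.prod_le_prod (fun j _ => by positivity)
        (fun j hj => hgap i j (Finset.mem_Ioi.1 hj)))
  have e3 : ∑ i : Fin d, (d - 1 - (i : ℕ)) = d * (d - 1) / 2 := by
    rw [Fin.sum_univ_eq_sum_range (fun k => d - 1 - k) d,
      Finset.sum_range_reflect (fun k => k) d, Finset.sum_range_id]
  have main : (∏ i : Fin d, ∏ j ∈ Ioi i, ((((j : ℕ) - (i : ℕ) : ℕ) : ℝ) * η))
      = ((∏ i : Fin d, ∏ j ∈ Ioi i, ((j : ℕ) - (i : ℕ)) : ℕ) : ℝ) * η ^ (d * (d - 1) / 2) := by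
    rw [← e3, Nat.cast_prod, ← Finset.prod_pow_eq_pow_sum, ← Finset.prod_mul_distrib]
    refine Finset.prod_congr rfl fun i _ => ?_
    rw [Finset.prod_mul_distrib, Finset.prod_const, Fin.card_Ioi, Nat.cast_prod]
  refine le_trans (le_of_eq ?_) step1
  rw [main, aux_nat_prod d]
  ring


theorem moment_difference_lower_bound_regular
    (d : ℕ) (hd : 1 ≤ d) (a x : Fin d → ℝ)
    (ha : ∀ i, a i ≠ 0) (hmono : StrictMono x)
    (hrange : ∀ j, x j ∈ Set.Icc (-1 : ℝ) 1)
    (η : ℝ) (hη : 0 < η) (hη' : η ≤ 2 / ((d : ℝ) - 1))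
    (hsep : ∀ (j : ℕ) (h : j + 1 < d), x ⟨j + 1, h⟩ - x ⟨j, Nat.lt_of_succ_lt h⟩ ≥ η)
    (γ : ℝ) (hγ : 0 < γ) (hγ1 : γ ≤ 1)
    (hamp : ∀ j, γ ≤ |a j|) (hamp1 : ∀ j, |a j| ≤ 1)
    (l : ℕ) (hl : l < d)
    (r : ℕ) (hr : r ≤ l) (b y : Fin r → ℝ)
    (hb : ∀ i, b i ≠ 0) (hy : Function.Injective y) :
    Real.sqrt (∑ k ∈ Finset.range (2 * d - 1),
        ((∑ i, a i * x i ^ k) - (∑ j, b j * y j ^ k)) ^ 2) ≥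
      min 1
        ((η ^ (d * (d - 1)) * γ ^ d * ∏ i ∈ Finset.Icc 1 (d - 1), (Nat.factorial i : ℝ) ^ 2) /
          (Real.sqrt (2 * d - 1) * (d : ℝ) ^ 2 * (Nat.factorial d : ℝ)
            * ((d : ℝ) + 1) ^ (d - 1))) := by
  set S := Real.sqrt (∑ k ∈ Finset.range (2 * d - 1),
      ((∑ i, a i * x i ^ k) - (∑ j, b j * y j ^ k)) ^ 2) with hSdef
  rcases le_or_gt 1 S with hS1 | hS1
  · exact le_trans (min_le_left _ _) hS1
  have hS0 : 0 ≤ S := Real.sqrt_nonneg _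
  refine le_trans (min_le_right _ _) ?_
  have hrd : r < d := lt_of_le_of_lt hr hl
  have hd0 : (0 : ℝ) < d := by exact_mod_cast hd
  -- bound on each moment difference
  have hDelta : ∀ k, k < 2 * d - 1 →
      |(∑ i, a i * x i ^ k) - (∑ j, b j * y j ^ k)| ≤ S := by
    intro k hk
    have h1 : ((∑ i, a i * x i ^ k) - (∑ j, b j * y j ^ k)) ^ 2 ≤
        ∑ k ∈ Finset.range (2 * d - 1),
          ((∑ i, a i * x i ^ k) - (∑ j, b j * y j ^ k)) ^ 2 :=
      Finset.single_le_sum (f := fun k =>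
          ((∑ i, a i * x i ^ k) - (∑ j, b j * y j ^ k)) ^ 2)
        (fun _ _ => sq_nonneg _) (Finset.mem_range.2 hk)
    calc |(∑ i, a i * x i ^ k) - (∑ j, b j * y j ^ k)|
        = Real.sqrt (((∑ i, a i * x i ^ k) - (∑ j, b j * y j ^ k)) ^ 2) :=
          (Real.sqrt_sq_eq_abs _).symm
      _ ≤ S := Real.sqrt_le_sqrt h1
  -- the Hankel matrices
  set A : Matrix (Fin d) (Fin d) ℝ :=
    Matrix.of (fun i j : Fin d => ∑ t, a t * x t ^ ((i : ℕ) + (j : ℕ))) with hAdef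
  set B : Matrix (Fin d) (Fin d) ℝ :=
    Matrix.of (fun i j : Fin d => ∑ t, b t * y t ^ ((i : ℕ) + (j : ℕ))) with hBdef
  have hij : ∀ i j : Fin d, (i : ℕ) + (j : ℕ) < 2 * d - 1 := by
    intro i j
    have := i.isLt
    have := j.isLt
    omega
  have hxabs : ∀ t, |x t| ≤ 1 := fun t => abs_le.2 ⟨(hrange t).1, (hrange t).2⟩
  have hA_bound : ∀ i j : Fin d, |A i j| ≤ (d : ℝ) := by
    intro i j
    have hAij : A i j = ∑ t, a t * x t ^ ((i : ℕ) + (j : ℕ)) := rfl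
    rw [hAij]
    calc |∑ t, a t * x t ^ ((i : ℕ) + (j : ℕ))| ≤ ∑ t, |a t * x t ^ ((i : ℕ) + (j : ℕ))| :=
        Finset.abs_sum_le_sum_abs _ _
      _ ≤ ∑ _t : Fin d, (1 : ℝ) := by
          refine Finset.sum_le_sum fun t _ => ?_
          rw [abs_mul, abs_pow]
          exact mul_le_one₀ (hamp1 t) (by positivity)
            (pow_le_one₀ (abs_nonneg _) (hxabs t))
      _ = (d : ℝ) := by simp
  have hAB_bound : ∀ i j : Fin d, |A i j - B i j| ≤ S := fun i j =>
    hDelta ((i : ℕ) + (j : ℕ)) (hij i j)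
  have hB_bound : ∀ i j : Fin d, |B i j| ≤ (d : ℝ) + 1 := by
    intro i j
    have h2 : |B i j| ≤ |A i j| + |B i j - A i j| := by
      simpa using abs_add_le (A i j) (B i j - A i j)
    rw [abs_sub_comm] at h2
    linarith [hA_bound i j, hAB_bound i j]
  -- determinant of A via Vandermonde
  have hA_eq : A = (Matrix.vandermonde x)ᵀ * (Matrix.diagonal a * Matrix.vandermonde x) := by
    ext i j
    rw [Matrix.mul_apply]
    have hAij : A i j = ∑ t, a t * x t ^ ((i : ℕ) + (j : ℕ)) := rfl
    rw [hAij]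
    refine Finset.sum_congr rfl fun t _ => ?_
    rw [Matrix.diagonal_mul, Matrix.transpose_apply, Matrix.vandermonde_apply,
      Matrix.vandermonde_apply, pow_add]
    ring
  have hdetA : A.det = (∏ i : Fin d, ∏ j ∈ Finset.Ioi i, (x j - x i)) ^ 2 * ∏ t, a t := by
    rw [hA_eq, Matrix.det_mul, Matrix.det_mul, Matrix.det_transpose, Matrix.det_diagonal,
      Matrix.det_vandermonde]
    ring
  -- determinant of B is zero
  set b' : Fin d → ℝ := fun i => if h : (i : ℕ) < r then b ⟨i, h⟩ else 0 with hb'def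
  set y' : Fin d → ℝ := fun i => if h : (i : ℕ) < r then y ⟨i, h⟩ else 0 with hy'def
  have hm' : ∀ k : ℕ, (∑ t, b t * y t ^ k) = ∑ i : Fin d, b' i * y' i ^ k := by
    intro k
    have h1 : ∀ i : Fin d, b' i * y' i ^ k =
        (fun n => if h : n < r then b ⟨n, h⟩ * y ⟨n, h⟩ ^ k else 0) (i : ℕ) := by
      intro i
      by_cases h : (i : ℕ) < r <;> simp [hb'def, hy'def, h]
    calc (∑ t, b t * y t ^ k)
        = ∑ n ∈ Finset.range r, (fun n => if h : n < r then b ⟨n, h⟩ * y ⟨n, h⟩ ^ k else 0) n := by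
          rw [← Fin.sum_univ_eq_sum_range]
          refine Finset.sum_congr rfl fun t _ => ?_
          simp [t.isLt]
      _ = ∑ n ∈ Finset.range d, (fun n => if h : n < r then b ⟨n, h⟩ * y ⟨n, h⟩ ^ k else 0) n := by
          refine Finset.sum_subset (Finset.range_subset_range.2 hrd.le) fun n _ hn => ?_
          simp [Finset.mem_range.not.1 hn]
      _ = ∑ i : Fin d, b' i * y' i ^ k := by
          rw [← Fin.sum_univ_eq_sum_range]
          exact Finset.sum_congr rfl fun i _ => (h1 i).symm
  have hB_eq : B = (Matrix.vandermonde y')ᵀ * (Matrix.diagonal b' * Matrix.vandermonde y') := by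
    ext i j
    rw [Matrix.mul_apply]
    have hBij : B i j = ∑ t, b t * y t ^ ((i : ℕ) + (j : ℕ)) := rfl
    rw [hBij, hm' ((i : ℕ) + (j : ℕ))]
    refine Finset.sum_congr rfl fun t _ => ?_
    rw [Matrix.diagonal_mul, Matrix.transpose_apply, Matrix.vandermonde_apply,
      Matrix.vandermonde_apply, pow_add]
    ring
  have hdetB : B.det = 0 := by
    rw [hB_eq, Matrix.det_mul, Matrix.det_mul, Matrix.det_diagonal]
    have hlast : b' ⟨d - 1, by omega⟩ = 0 := by
      have : ¬ (d - 1 < r) := by omega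
      simp [hb'def, this]
    rw [Finset.prod_eq_zero (Finset.mem_univ (⟨d - 1, by omega⟩ : Fin d)) hlast]
    ring
  -- lower bound for |det A|
  have hgap : ∀ i j : Fin d, i < j → ((((j : ℕ) - (i : ℕ) : ℕ) : ℝ)) * η ≤ x j - x i := by
    intro i j hlt
    have hlt' : (i : ℕ) < (j : ℕ) := hlt
    have h := aux_gap d x η hsep (i : ℕ) ((j : ℕ) - (i : ℕ)) (by omega)
    have e1 : (⟨(i : ℕ) + ((j : ℕ) - (i : ℕ)), by omega⟩ : Fin d) = j := by
      apply Fin.ext; simp; omega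
    have e2 : (⟨(i : ℕ), by omega⟩ : Fin d) = i := by apply Fin.ext; simp
    rwa [e1, e2] at h
  have hVW := aux_vdm_lower d x η hη hgap
  set W : ℝ := η ^ (d * (d - 1) / 2) * ((∏ k ∈ Finset.range d, k.factorial : ℕ) : ℝ) with hWdef
  have hW0 : 0 ≤ W := by positivity
  have hprodabs : γ ^ d ≤ ∏ t, |a t| := by
    calc γ ^ d = ∏ _t : Fin d, γ := by simp
      _ ≤ ∏ t, |a t| := Finset.prod_le_prod (fun _ _ => hγ.le) (fun t _ => hamp t)
  have hdetA_lower : W ^ 2 * γ ^ d ≤ |A.det| := by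
    rw [hdetA, abs_mul, abs_prod]
    have h1 : |(∏ i : Fin d, ∏ j ∈ Finset.Ioi i, (x j - x i)) ^ 2| =
        (∏ i : Fin d, ∏ j ∈ Finset.Ioi i, (x j - x i)) ^ 2 := abs_of_nonneg (sq_nonneg _)
    rw [h1]
    have h2 : W ^ 2 ≤ (∏ i : Fin d, ∏ j ∈ Finset.Ioi i, (x j - x i)) ^ 2 :=
      pow_le_pow_left₀ hW0 hVW 2
    exact mul_le_mul h2 hprodabs (by positivity) (sq_nonneg _)
  -- Lipschitz bound
  have hlip := aux_det_lipschitz A B ((d : ℝ) + 1) S (by positivity) hS0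
    (fun i j => (hA_bound i j).trans (by linarith)) hB_bound hAB_bound
  rw [hdetB, sub_zero] at hlip
  -- numerator identification
  have hNm : W ^ 2 * γ ^ d =
      η ^ (d * (d - 1)) * γ ^ d * ∏ i ∈ Finset.Icc 1 (d - 1), (Nat.factorial i : ℝ) ^ 2 := by
    have hq : d * (d - 1) / 2 * 2 = d * (d - 1) := by
      have : Even (d * (d - 1)) := by
        rcases Nat.even_or_odd d with h | h
        · exact h.mul_right _
        · exact (Nat.Odd.sub_odd h odd_one).mul_left _
      exact Nat.div_mul_cancel this.two_dvd
    have hK : (∏ k ∈ Finset.range d, k.factorial) = ∏ k ∈ Finset.Icc 1 (d - 1), k.factorial := by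
      have h1 := Nat.prod_range_succ_factorial (d - 1)
      have h2 := Nat.prod_Icc_factorial (d - 1)
      have hd' : d - 1 + 1 = d := by omega
      rw [hd'] at h1
      rw [h1, h2]
    rw [hWdef, mul_pow, ← pow_mul, hq, hK, Nat.cast_prod, ← Finset.prod_pow]
    push_cast
    ring
  -- final chain
  have hfact0 : (0 : ℝ) < (Nat.factorial d : ℝ) := by exact_mod_cast d.factorial_pos
  set D : ℝ := (d : ℝ) * ((Nat.factorial d : ℝ) * ((d : ℝ) + 1) ^ (d - 1)) with hDdef
  have hD0 : 0 < D := by positivity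
  have hmain : W ^ 2 * γ ^ d ≤ D * S := by
    calc W ^ 2 * γ ^ d ≤ |A.det| := hdetA_lower
      _ ≤ (d : ℝ) * ((Nat.factorial d : ℝ) * (S * ((d : ℝ) + 1) ^ (d - 1))) := hlip
      _ = D * S := by rw [hDdef]; ring
  set D' : ℝ := Real.sqrt (2 * d - 1) * (d : ℝ) ^ 2 * (Nat.factorial d : ℝ)
      * ((d : ℝ) + 1) ^ (d - 1) with hD'def
  have hsqrt1 : 1 ≤ Real.sqrt (2 * d - 1) := by
    rw [Real.one_le_sqrt]
    have : (1 : ℝ) ≤ (d : ℝ) := by exact_mod_cast hd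
    linarith
  have hDD' : D ≤ D' := by
    have h1 : D' = (Real.sqrt (2 * d - 1) * (d : ℝ)) * D := by rw [hD'def, hDdef]; ring
    have h2 : 1 ≤ Real.sqrt (2 * d - 1) * (d : ℝ) := by
      have : (1 : ℝ) ≤ (d : ℝ) := by exact_mod_cast hd
      nlinarith
    nlinarith
  have hD'0 : 0 < D' := lt_of_lt_of_le hD0 hDD'
  rw [← hNm]
  calc W ^ 2 * γ ^ d / D' ≤ W ^ 2 * γ ^ d / D := by
        apply div_le_div_of_nonneg_left (by positivity) hD0 hDD'
    _ ≤ S := by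
        rw [div_le_iff₀ hD0]
        linarith [hmain]
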